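/- arXiv:1902.09570 — 3 statements merged into one kernel-verified Lean document; each statement's English description precedes it below -/
import Mathlib

section
/- Let U be an invariant set under the group of finitary permutations of A, and let X ⊆ U be a uniformly supported subset, i.e., some finite set T ⊆ A supports every element of X. Then X is finitely supported as an element of the powerset of U with the elementwise action, supp(X) = ⋃_{x ∈ X} supp(x), and consequently supp(X) itself supports every element of X. -/
open Pointwise

/-- The group of finitary permutations of the set `A` of atoms: bijections of `A`
whose set of non-fixed points is finite. -/
def FinPerm (A : Type*) : Subgroup (Equiv.Perm A) where
  carrier := {π : Equiv.Perm A | {a : A | π a ≠ a}.Finite}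
  one_mem' := by simp
  mul_mem' := by
    intro π σ hπ hσ
    refine Set.Finite.subset (Set.Finite.union hπ hσ) ?_
    intro a ha
    simp only [Set.mem_setOf_eq, Set.mem_union] at *
    by_contra h
    push_neg at h
    obtain ⟨h1, h2⟩ := h
    exact ha (by rw [Equiv.Perm.mul_apply, h2, h1])
  inv_mem' := by
    intro π hπ
    refine Set.Finite.subset hπ ?_
    intro a ha
    simp only [Set.mem_setOf_eq] at *
    intro h
    exact ha (π.injective (by rw [← Equiv.Perm.mul_apply, mul_inv_cancel, Equiv.Perm.one_apply, h]))

/-- An element `x` is finitely supported if some finite set of atoms supports it. -/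
def FinSupp (A : Type*) {X : Type*} [SMul (FinPerm A) X] (x : X) : Prop :=
  ∃ S : Finset A, MulAction.Supports (FinPerm A) (S : Set A) x

/-- The least support of an element: the intersection of all finite sets of atoms
supporting it. -/
def supp (A : Type*) {X : Type*} [SMul (FinPerm A) X] (x : X) : Set A :=
  ⋂₀ {S : Set A | S.Finite ∧ MulAction.Supports (FinPerm A) S x}

/-- A set `S` of atoms supports a function `f` if `f (π • x) = π • f x` for every
finitary permutation `π` fixing `S` pointwise. -/
def SuppFun (A : Type*) {X Y : Type*} [SMul (FinPerm A) X] [SMul (FinPerm A) Y]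
    (S : Set A) (f : X → Y) : Prop :=
  ∀ π : FinPerm A, (∀ a ∈ S, π • a = a) → ∀ x, f (π • x) = π • f x

/-- A set `S` of atoms supports a function `f` between the subsets `X` and `Y` if, for
every finitary permutation `π` fixing `S` pointwise and every `x ∈ X`, we have
`π • x ∈ X`, `π • f x ∈ Y` and `f (π • x) = π • f x`. -/
def SuppFunOn (A : Type*) {U V : Type*} [SMul (FinPerm A) U] [SMul (FinPerm A) V]
    (S : Set A) (X : Set U) (Y : Set V) (f : U → V) : Prop :=
  ∀ π : FinPerm A, (∀ a ∈ S, π • a = a) →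
    ∀ x ∈ X, π • x ∈ X ∧ π • f x ∈ Y ∧ f (π • x) = π • f x

/-- `℘_fs(X)`: the finitely supported subsets of the set `X`. -/
def Pfs (A : Type*) {U : Type*} [SMul (FinPerm A) U] (X : Set U) : Set (Set U) :=
  {Z : Set U | Z ⊆ X ∧ FinSupp A Z}



section Aux

variable {A U : Type*}

lemma finPerm_smul_apply (π : FinPerm A) (a : A) : π • a = π.val a := rfl

lemma swap_mem_finPerm [DecidableEq A] (a b : A) : Equiv.swap a b ∈ FinPerm A := by
  refine Set.Finite.subset ((Set.finite_singleton b).insert a) ?_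
  intro c hc
  simp only [Set.mem_setOf_eq] at hc
  by_contra h
  simp only [Set.mem_insert_iff, Set.mem_singleton_iff] at h
  push_neg at h
  exact hc (Equiv.swap_apply_of_ne_of_ne h.1 h.2)

variable [Infinite A] [MulAction (FinPerm A) U]

/-- Intersection of two finite supports is a support. -/
lemma inter_supports (x : U) {S₁ S₂ : Set A} (h₁f : S₁.Finite) (h₂f : S₂.Finite)
    (h₁ : MulAction.Supports (FinPerm A) S₁ x) (h₂ : MulAction.Supports (FinPerm A) S₂ x) :
    MulAction.Supports (FinPerm A) (S₁ ∩ S₂) x := by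
  classical
  intro π hπ
  have hD : (S₁ ∪ S₂ ∪ {a | π.val a ≠ a}).Finite := (h₁f.union h₂f).union π.2
  set B : Finset A := (h₂f.diff : (S₂ \ S₁).Finite).toFinset with hB
  obtain ⟨C, hCsub, hCcard⟩ := hD.infinite_compl.exists_subset_card_eq B.card
  have e : {y // y ∈ B} ≃ {y // y ∈ C} := Finset.equivOfCardEq hCcard.symm
  have hBmem : ∀ a, a ∈ B ↔ a ∈ S₂ \ S₁ := by
    intro a; rw [hB, Set.Finite.mem_toFinset]
  have hCD : ∀ a ∈ C, a ∉ S₁ ∪ S₂ ∪ {b | π.val b ≠ b} := fun a ha => hCsub ha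
  have hBC : ∀ a, ¬(a ∈ B ∧ a ∈ C) := by
    rintro a ⟨haB, haC⟩
    exact hCD a haC (Or.inl (Or.inr ((hBmem a).1 haB).1))
  -- the swap of B and C
  set f : A → A := fun a =>
    if h : a ∈ B then (e ⟨a, h⟩ : A)
    else if h : a ∈ C then (e.symm ⟨a, h⟩ : A) else a with hf
  have hfB : ∀ (a : A) (h : a ∈ B), f a = (e ⟨a, h⟩ : A) := by
    intro a h; simp [hf, h]
  have hfC : ∀ (a : A) (h : a ∈ C), f a = (e.symm ⟨a, h⟩ : A) := by
    intro a h
    have hnB : a ∉ B := fun h' => hBC a ⟨h', h⟩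
    simp [hf, hnB, h]
  have hfo : ∀ (a : A), a ∉ B → a ∉ C → f a = a := by
    intro a h1 h2; simp [hf, h1, h2]
  have hinv : Function.Involutive f := by
    intro a
    by_cases h1 : a ∈ B
    · rw [hfB a h1]
      have hc : (e ⟨a, h1⟩ : A) ∈ C := (e ⟨a, h1⟩).2
      rw [hfC _ hc]
      have : (⟨(e ⟨a, h1⟩ : A), hc⟩ : {y // y ∈ C}) = e ⟨a, h1⟩ := rfl
      rw [this, Equiv.symm_apply_apply]
    · by_cases h2 : a ∈ C
      · rw [hfC a h2]
        have hb : (e.symm ⟨a, h2⟩ : A) ∈ B := (e.symm ⟨a, h2⟩).2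
        rw [hfB _ hb]
        have : (⟨(e.symm ⟨a, h2⟩ : A), hb⟩ : {y // y ∈ B}) = e.symm ⟨a, h2⟩ := rfl
        rw [this, Equiv.apply_symm_apply]
      · rw [hfo a h1 h2, hfo a h1 h2]
  set σ₀ : Equiv.Perm A := hinv.toPerm f with hσ₀
  have hσ₀mem : σ₀ ∈ FinPerm A := by
    refine Set.Finite.subset ((B.finite_toSet).union (C.finite_toSet)) ?_
    intro a ha
    simp only [Set.mem_setOf_eq] at ha
    by_contra h
    simp only [Set.mem_union, Finset.mem_coe] at h
    push_neg at h
    exact ha (hfo a h.1 h.2)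
  set σ : FinPerm A := ⟨σ₀, hσ₀mem⟩ with hσ
  have hσapp : ∀ a : A, σ • a = f a := fun a => rfl
  have hσx : σ • x = x := by
    refine h₁ σ ?_
    intro a ha
    rw [hσapp]
    refine hfo a ?_ ?_
    · intro hb; exact ((hBmem a).1 hb).2 ha
    · intro hc; exact hCD a hc (Or.inl (Or.inl ha))
  -- τ = σ⁻¹ * π * σ fixes S₂ pointwise
  have hτ : (σ⁻¹ * π * σ) • x = x := by
    refine h₂ _ ?_
    intro a ha
    have : ((σ⁻¹ * π * σ) : FinPerm A) • a = σ₀⁻¹ (π.val (σ₀ a)) := rfl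
    rw [this]
    by_cases h1 : a ∈ S₁
    · have hfa : σ₀ a = a := hfo a (fun hb => ((hBmem a).1 hb).2 h1)
        (fun hc => hCD a hc (Or.inl (Or.inl h1)))
      have hπa : π • a = a := hπ ⟨h1, ha⟩
      have hπa' : π.val a = a := hπa
      rw [hfa, hπa']
      exact σ₀.injective (by rw [← Equiv.Perm.mul_apply, mul_inv_cancel, Equiv.Perm.one_apply]; exact hfa.symm)
    · have haB : a ∈ B := (hBmem a).2 ⟨ha, h1⟩
      have hc : (e ⟨a, haB⟩ : A) ∈ C := (e ⟨a, haB⟩).2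
      have hfa : σ₀ a = (e ⟨a, haB⟩ : A) := hfB a haB
      have hπc : π.val (e ⟨a, haB⟩ : A) = (e ⟨a, haB⟩ : A) := by
        by_contra h
        exact hCD _ hc (Or.inr h)
      rw [hfa, hπc]
      have : σ₀ (e ⟨a, haB⟩ : A) = a := by
        rw [show (σ₀ : A → A) = f from rfl] at *
        rw [← hfa]; exact hinv a
      calc σ₀⁻¹ (e ⟨a, haB⟩ : A) = σ₀⁻¹ (σ₀ a) := by rw [hfa]
        _ = a := σ₀.symm_apply_apply a
  have key : π • x = σ • ((σ⁻¹ * π * σ) • x) := by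
    have hk : σ * (σ⁻¹ * π * σ) = π * σ := by group
    rw [← mul_smul, hk, mul_smul, hσx]
  rw [key, hτ, hσx]

omit [Infinite A] in
lemma supp_subset_of_supports (x : U) {S : Set A} (hSf : S.Finite)
    (hS : MulAction.Supports (FinPerm A) S x) : supp A x ⊆ S :=
  Set.sInter_subset_of_mem ⟨hSf, hS⟩

/-- The least support of a finitely supported element is itself a (finite) support. -/
lemma supp_spec (x : U) (hx : FinSupp A x) :
    (supp A x).Finite ∧ MulAction.Supports (FinPerm A) (supp A x) x := by
  classical
  obtain ⟨S₀, hS₀⟩ := hx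
  have hex : ∃ n : ℕ, ∃ S : Finset A, S.card = n ∧
      MulAction.Supports (FinPerm A) (S : Set A) x := ⟨S₀.card, S₀, rfl, hS₀⟩
  obtain ⟨S, hScard, hSsupp⟩ := Nat.find_spec hex
  have hmin : ∀ S' : Finset A, MulAction.Supports (FinPerm A) (S' : Set A) x →
      S.card ≤ S'.card := by
    intro S' hS'
    rw [hScard]
    exact Nat.find_le ⟨S', rfl, hS'⟩
  -- S is contained in every finite support
  have hle : ∀ S' : Set A, S'.Finite → MulAction.Supports (FinPerm A) S' x →
      (S : Set A) ⊆ S' := by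
    intro S' hS'f hS'
    have hint := inter_supports x (S.finite_toSet) hS'f hSsupp hS'
    have hintf : ((S : Set A) ∩ S').Finite := (S.finite_toSet).inter_of_left S'
    set I : Finset A := hintf.toFinset with hI
    have hIsupp : MulAction.Supports (FinPerm A) (I : Set A) x := by
      have : (I : Set A) = (S : Set A) ∩ S' := hintf.coe_toFinset
      rw [this]; exact hint
    have hIsub : I ⊆ S := by
      intro a ha
      have := (hintf.mem_toFinset).1 ha
      exact this.1
    have hcard : S.card ≤ I.card := hmin I hIsupp
    have hIS : I = S := Finset.eq_of_subset_of_card_le hIsub hcard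
    intro a ha
    have : a ∈ I := hIS ▸ (by exact_mod_cast ha)
    exact ((hintf.mem_toFinset).1 this).2
  have hsupp_eq : supp A x = (S : Set A) := by
    apply Set.Subset.antisymm
    · exact supp_subset_of_supports x (S.finite_toSet) hSsupp
    · intro a ha
      intro S' hS'
      exact hle S' hS'.1 hS'.2 ha
  rw [hsupp_eq]
  exact ⟨S.finite_toSet, hSsupp⟩

omit [Infinite A] in
/-- Equivariance of least supports: `π • supp x ⊆ supp (π • x)` pointwise. -/
lemma smul_mem_supp_smul (π : FinPerm A) (x : U) {a : A} (ha : a ∈ supp A x) :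
    π • a ∈ supp A (π • x) := by
  intro S hS
  obtain ⟨hSf, hSsupp⟩ := hS
  -- π⁻¹ • S supports x
  have hpre : MulAction.Supports (FinPerm A) ((fun b => π⁻¹ • b) '' S) x := by
    intro σ hσ
    have hfix : ∀ b ∈ S, (π * σ * π⁻¹) • b = b := by
      intro b hb
      have h1 : σ • (π⁻¹ • b) = π⁻¹ • b := hσ ⟨b, hb, rfl⟩
      have : (π * σ * π⁻¹) • b = π • (σ • (π⁻¹ • b)) := by
        rw [← mul_smul, ← mul_smul]
      rw [this, h1, ← mul_smul, mul_inv_cancel, one_smul]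
    have h2 := hSsupp (π * σ * π⁻¹) hfix
    have h3 : (π * σ * π⁻¹) • (π • x) = π • (σ • x) := by
      rw [← mul_smul, ← mul_smul]
      congr 1
      group
    rw [h3] at h2
    exact smul_left_cancel π h2
  have hpref : ((fun b => π⁻¹ • b) '' S).Finite := hSf.image _
  have hmem : a ∈ (fun b => π⁻¹ • b) '' S := supp_subset_of_supports x hpref hpre ha
  obtain ⟨b, hb, hab⟩ := hmem
  have : π • a = b := by
    rw [← hab, ← mul_smul, mul_inv_cancel, one_smul]
  rw [this]
  exact hb

end Aux

/-- a uniformly supported subset `X` of an invariant set `U` (all of whose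
elements are supported by one common finite set `T` of atoms) is finitely supported with
respect to the elementwise action, its least support is the union of the least supports
of its elements, and consequently `supp X` itself supports every element of `X`. -/
theorem uniformly_supported_subset_finSupp_and_supp_eq_iUnion {A U : Type*} [Infinite A]
    [MulAction (FinPerm A) U] (hU : ∀ u : U, FinSupp A u)
    (X : Set U) (T : Finset A)
    (hT : ∀ x ∈ X, MulAction.Supports (FinPerm A) (T : Set A) x) :
    FinSupp A X ∧ (supp A X = ⋃ x ∈ X, supp A x) ∧
      (∀ x ∈ X, MulAction.Supports (FinPerm A) (supp A X) x) := by
  classical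
  -- T supports X elementwise
  have hTX : MulAction.Supports (FinPerm A) (T : Set A) X := by
    intro π hπ
    have hfix : ∀ x ∈ X, π • x = x := fun x hx => hT x hx π hπ
    have hfix' : ∀ x ∈ X, π⁻¹ • x = x := fun x hx => hT x hx π⁻¹
      (fun a ha => by
        have := hπ ha
        calc π⁻¹ • a = π⁻¹ • (π • a) := by rw [this]
          _ = a := by rw [← mul_smul, inv_mul_cancel, one_smul])
    ext u
    rw [Set.mem_smul_set]
    constructor
    · rintro ⟨y, hy, rfl⟩
      rw [hfix y hy]; exact hy
    · intro hu
      exact ⟨u, hu, hfix u hu⟩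
  have hFS : FinSupp A X := ⟨T, hTX⟩
  -- each supp x ⊆ T
  have hsuppT : ∀ x ∈ X, supp A x ⊆ (T : Set A) := fun x hx =>
    supp_subset_of_supports x T.finite_toSet (hT x hx)
  set W : Set A := ⋃ x ∈ X, supp A x with hW
  have hWT : W ⊆ (T : Set A) := by
    intro a ha
    simp only [hW, Set.mem_iUnion] at ha
    obtain ⟨x, hx, hax⟩ := ha
    exact hsuppT x hx hax
  have hWf : W.Finite := T.finite_toSet.subset hWT
  -- W supports X
  have hWsupp : MulAction.Supports (FinPerm A) W X := by
    intro π hπ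
    have hfix : ∀ x ∈ X, π • x = x := by
      intro x hx
      refine (supp_spec x (hU x)).2 π ?_
      intro a ha
      exact hπ (Set.mem_iUnion₂.2 ⟨x, hx, ha⟩)
    have hfix' : ∀ x ∈ X, π⁻¹ • x = x := by
      intro x hx
      calc π⁻¹ • x = π⁻¹ • (π • x) := by rw [hfix x hx]
        _ = x := by rw [← mul_smul, inv_mul_cancel, one_smul]
    ext u
    rw [Set.mem_smul_set]
    constructor
    · rintro ⟨y, hy, rfl⟩
      rw [hfix y hy]; exact hy
    · intro hu
      exact ⟨u, hu, hfix u hu⟩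
  -- supp X = W
  have hsupp_eq : supp A X = W := by
    apply Set.Subset.antisymm
    · exact supp_subset_of_supports X hWf hWsupp
    · intro a ha
      simp only [hW, Set.mem_iUnion] at ha
      obtain ⟨x, hx, hax⟩ := ha
      intro S hS
      obtain ⟨hSf, hSsupp⟩ := hS
      by_contra haS
      -- pick a fresh b
      obtain ⟨Cb, hCbsub, hCbcard⟩ :=
        ((T.finite_toSet.union hSf).union (Set.finite_singleton a)).infinite_compl.exists_subset_card_eq 1
      obtain ⟨b, hb⟩ := Finset.card_eq_one.1 hCbcard
      have hbfresh : b ∉ ((T : Set A) ∪ S) ∪ {a} := hCbsub (by rw [hb]; exact Finset.mem_singleton_self b)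
      simp only [Set.mem_union, Set.mem_singleton_iff] at hbfresh
      push_neg at hbfresh
      obtain ⟨⟨hbT, hbS⟩, hba⟩ := hbfresh
      set π : FinPerm A := ⟨Equiv.swap a b, swap_mem_finPerm a b⟩ with hπdef
      have hπS : ∀ c ∈ S, π • c = c := by
        intro c hc
        have hca : c ≠ a := fun h => haS (h ▸ hc)
        have hcb : c ≠ b := fun h => hbS (h ▸ hc)
        show Equiv.swap a b c = c
        exact Equiv.swap_apply_of_ne_of_ne hca hcb
      -- π • X = X, so π • x ∈ X
      have hπX : π • X = X := hSsupp π hπS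
      have hπxX : π • x ∈ X := by
        rw [← hπX]
        exact ⟨x, hx, rfl⟩
      have hbsupp : π • a ∈ supp A (π • x) := smul_mem_supp_smul π x hax
      have hπa : π • a = b := by
        show Equiv.swap a b a = b
        exact Equiv.swap_apply_left a b
      rw [hπa] at hbsupp
      exact hbT (hsuppT _ hπxX hbsupp)
  refine ⟨hFS, hsupp_eq, ?_⟩
  intro x hx
  have hsub : supp A x ⊆ supp A X := by
    rw [hsupp_eq]
    exact fun a ha => Set.mem_iUnion₂.2 ⟨x, hx, ha⟩
  exact ((supp_spec x (hU x)).2).mono hsub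
end

section
/- (Finitely supported Cantor–Schröder–Bernstein) Let B and C be invariant sets under the group of finitary permutations of A. If f : B → C is an injection supported by a finite set S ⊆ A and g : C → B is an injection supported by a finite set T ⊆ A, then there exists a bijection h : B → C supported by S ∪ T. -/
open Pointwise

/-- finitely supported Cantor–Schröder–Bernstein: if `B` and `C` are
invariant sets, `f : B → C` is an injection supported by the finite set `S` of atoms and
`g : C → B` is an injection supported by the finite set `T` of atoms, then there is a
bijection `h : B → C` supported by `S ∪ T`. -/
theorem fsm_cantor_schroeder_bernstein {A B C : Type*} [Infinite A]
    [MulAction (FinPerm A) B] [MulAction (FinPerm A) C]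
    (hB : ∀ b : B, FinSupp A b) (hC : ∀ c : C, FinSupp A c)
    (f : B → C) (S : Finset A) (hf : Function.Injective f) (hfS : SuppFun A (S : Set A) f)
    (g : C → B) (T : Finset A) (hg : Function.Injective g) (hgT : SuppFun A (T : Set A) g) :
    ∃ h : B → C, Function.Bijective h ∧ SuppFun A ((S : Set A) ∪ (T : Set A)) h := by
  classical
  set F : B → B := fun b => g (f b) with hF
  set U : Set B := ⋃ n, F^[n] '' (Set.range g)ᶜ with hU
  have hRc : (Set.range g)ᶜ ⊆ U := fun b hb =>
    Set.mem_iUnion.2 ⟨0, by simpa using hb⟩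
  have hnU : ∀ b, b ∉ U → ∃ c, g c = b := by
    intro b hb
    by_contra hcon
    exact hb (hRc (by simpa [Set.mem_range] using hcon))
  let h : B → C := fun b => if hb : b ∈ U then f b else (hnU b hb).choose
  have hpos : ∀ b (hb : b ∈ U), h b = f b := by
    intro b hb; simp only [h, dif_pos hb]
  have hval : ∀ b (hb : b ∉ U), g (h b) = b := by
    intro b hb
    simp only [h, dif_neg hb]
    exact (hnU b hb).choose_spec
  have hmem : ∀ b, b ∈ U → ∃ n x, x ∉ Set.range g ∧ F^[n] x = b := by
    intro b hb
    rw [hU, Set.mem_iUnion] at hb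
    obtain ⟨n, x, hx, hxe⟩ := hb
    exact ⟨n, x, hx, hxe⟩
  have hFU : ∀ b ∈ U, F b ∈ U := by
    intro b hb
    obtain ⟨n, x, hx, rfl⟩ := hmem b hb
    exact Set.mem_iUnion.2 ⟨n+1, x, hx, (Function.iterate_succ_apply' F n x)⟩
  have hinj : Function.Injective h := by
    intro b1 b2 he
    by_cases h1 : b1 ∈ U <;> by_cases h2 : b2 ∈ U
    · rw [hpos b1 h1, hpos b2 h2] at he; exact hf he
    · exfalso
      have hgb : g (h b2) = b2 := hval b2 h2
      rw [← he, hpos b1 h1] at hgb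
      exact h2 (hgb ▸ hFU b1 h1)
    · exfalso
      have hgb : g (h b1) = b1 := hval b1 h1
      rw [he, hpos b2 h2] at hgb
      exact h1 (hgb ▸ hFU b2 h2)
    · have := hval b1 h1
      rw [he, hval b2 h2] at this
      exact this.symm
  have hsurj : Function.Surjective h := by
    intro c
    by_cases hgc : g c ∈ U
    · obtain ⟨n, x, hx, hxe⟩ := hmem _ hgc
      cases n with
      | zero => exact absurd ⟨c, hxe.symm⟩ hx
      | succ m =>
        rw [Function.iterate_succ_apply'] at hxe
        have hb : F^[m] x ∈ U := Set.mem_iUnion.2 ⟨m, x, hx, rfl⟩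
        refine ⟨F^[m] x, ?_⟩
        rw [hpos _ hb]
        exact hg hxe
    · exact ⟨g c, hg (hval (g c) hgc)⟩
  have key : ∀ (π : FinPerm A), (∀ a ∈ (S : Set A) ∪ (T : Set A), π • a = a) →
      (∀ b, f (π • b) = π • f b) ∧ (∀ c, g (π • c) = π • g c) :=
    fun π hπ => ⟨hfS π (fun a ha => hπ a (Set.mem_union_left _ ha)),
      hgT π (fun a ha => hπ a (Set.mem_union_right _ ha))⟩
  have hfix_inv : ∀ (π : FinPerm A), (∀ a ∈ (S : Set A) ∪ (T : Set A), π • a = a) →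
      (∀ a ∈ (S : Set A) ∪ (T : Set A), π⁻¹ • a = a) := by
    intro π hπ a ha
    conv_lhs => rw [← hπ a ha]
    exact inv_smul_smul π a
  have hUc : ∀ (π : FinPerm A), (∀ a ∈ (S : Set A) ∪ (T : Set A), π • a = a) →
      ∀ b ∈ U, π • b ∈ U := by
    intro π hπ b hb
    obtain ⟨hfπ, hgπ⟩ := key π hπ
    obtain ⟨hfπ', hgπ'⟩ := key π⁻¹ (hfix_inv π hπ)
    have hFπ : ∀ b, F (π • b) = π • F b := by
      intro b; rw [hF]; simp only; rw [hfπ, hgπ]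
    have hit : ∀ m y, F^[m] (π • y) = π • F^[m] y := by
      intro m
      induction m with
      | zero => intro y; simp
      | succ m ih =>
        intro y
        rw [Function.iterate_succ_apply', Function.iterate_succ_apply', ih y, hFπ]
    obtain ⟨n, x, hx, rfl⟩ := hmem b hb
    have hx' : π • x ∉ Set.range g := by
      rintro ⟨c, hc⟩
      refine hx ⟨π⁻¹ • c, ?_⟩
      rw [hgπ', hc, inv_smul_smul]
    exact Set.mem_iUnion.2 ⟨n, π • x, hx', hit n x⟩
  refine ⟨h, ⟨hinj, hsurj⟩, ?_⟩
  intro π hπ b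
  obtain ⟨hfπ, hgπ⟩ := key π hπ
  by_cases hb : b ∈ U
  · rw [hpos _ hb, hpos _ (hUc π hπ b hb), hfπ]
  · have hpb : π • b ∉ U := by
      intro hc
      have := hUc π⁻¹ (hfix_inv π hπ) _ hc
      rw [inv_smul_smul] at this
      exact hb this
    apply hg
    rw [hval _ hpb, hgπ, hval _ hb]
end

section
/- There is no finitely supported injection from A × A (with the componentwise action of finitary permutations) into the set A of atoms. -/
open Pointwise

-- auxiliary: the swap of two atoms as a finitary permutation. -/
def swapFP {A : Type*} [DecidableEq A] (x y : A) : FinPerm A :=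
  ⟨Equiv.swap x y, by
    refine Set.Finite.subset ((Set.finite_singleton y).insert x) ?_
    intro a ha
    simp only [Set.mem_setOf_eq] at ha
    by_contra h
    simp only [Set.mem_insert_iff, Set.mem_singleton_iff] at h
    push_neg at h
    exact ha (Equiv.swap_apply_of_ne_of_ne h.1 h.2)⟩

lemma swapFP_smul {A : Type*} [DecidableEq A] (x y a : A) :
    swapFP x y • a = Equiv.swap x y a := rfl

/-- there is no finitely supported injection from `A × A` (with the
componentwise action of finitary permutations) into the set `A` of atoms. -/
theorem no_finSupp_injection_atomPairs_to_atoms {A : Type*} [Infinite A] :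
    ¬ ∃ (f : A × A → A) (S : Finset A),
      Function.Injective f ∧ SuppFun A (S : Set A) f := by
  classical
  rintro ⟨f, S, hinj, hsupp⟩
  obtain ⟨a, ha⟩ := Infinite.exists_notMem_finset S
  obtain ⟨b, hb⟩ := Infinite.exists_notMem_finset (insert a S)
  obtain ⟨c, hc⟩ := Infinite.exists_notMem_finset (insert a (insert b S))
  simp only [Finset.mem_insert, not_or] at hb hc
  have hba : b ≠ a := hb.1
  have hca : c ≠ a := hc.1
  have hcb : c ≠ b := hc.2.1
  have key : ∀ x y : A, x ∉ S → y ∉ S →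
      f (swapFP x y • (a, b) : A × A) = Equiv.swap x y (f (a, b)) := by
    intro x y hx hy
    have := hsupp (swapFP x y) (fun s hs => by
      rw [swapFP_smul]
      exact Equiv.swap_apply_of_ne_of_ne (fun h => hx (h ▸ hs)) (fun h => hy (h ▸ hs))) (a, b)
    exact this
  -- f (a,b) ∈ {a, b}
  have hmem : f (a, b) = a ∨ f (a, b) = b := by
    by_contra h
    push_neg at h
    have h1 := key a b ha hb.2
    have : (swapFP a b • (a, b) : A × A) = (b, a) := by
      simp [Prod.smul_def, swapFP_smul]
    rw [this, Equiv.swap_apply_of_ne_of_ne h.1 h.2] at h1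
    have := hinj h1
    simp at this
    exact hba (this.1.symm ▸ rfl : b = a)
  -- swap b c : f (a, c) = swap b c (f (a,b))
  have h2 := key b c hb.2 hc.2.2
  have e2 : (swapFP b c • (a, b) : A × A) = (a, c) := by
    simp [Prod.smul_def, swapFP_smul, Equiv.swap_apply_of_ne_of_ne hba.symm hca.symm]
  rw [e2] at h2
  rcases hmem with hfa | hfb
  · rw [hfa, Equiv.swap_apply_of_ne_of_ne hba.symm hca.symm, ← hfa] at h2
    have := hinj h2
    simp at this
    exact hcb this.2
  · rw [hfb, Equiv.swap_apply_left] at h2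
    -- h2 : f (a, c) = c; now swap a b fixes c, gives f (b, c) = c too
    have h3 := key a b ha hb.2
    have e3 : (swapFP a b • (a, b) : A × A) = (b, a) := by
      simp [Prod.smul_def, swapFP_smul]
    rw [e3, hfb, Equiv.swap_apply_right] at h3
    -- h3 : f (b, a) = a
    have h4 := hsupp (swapFP b c) (fun s hs => by
      rw [swapFP_smul]
      exact Equiv.swap_apply_of_ne_of_ne (fun h => hb.2 (h ▸ hs)) (fun h => hc.2.2 (h ▸ hs)))
      (b, a)
    have e4 : (swapFP b c • (b, a) : A × A) = (c, a) := by
      simp [Prod.smul_def, swapFP_smul, Equiv.swap_apply_of_ne_of_ne hca hcb,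
        Equiv.swap_apply_of_ne_of_ne hba.symm hca.symm]
    rw [e4, h3] at h4
    have h4' : f (c, a) = Equiv.swap b c a := h4
    rw [Equiv.swap_apply_of_ne_of_ne hba.symm hca.symm] at h4'
    -- h4' : f (c, a) = a = f (b, a)
    have := hinj (h4'.trans h3.symm)
    simp at this
    exact hcb this
end
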